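/- arXiv:2501.10916 — 2 statements merged into one kernel-verified Lean document; each statement's English description precedes it below -/
import Mathlib

section
/- For every real x with 0 < x < 1, β₁(1/x) - β₂(1/x) = 2x² ∑_{n≥1} (1/(n+x) - 1/(n+2x)) > 0; in particular β₁(ℓ) > β₂(ℓ) for every integer ℓ ≥ 2. -/
/-- The digamma function `ψ(x) = Γ'(x)/Γ(x)`. -/
noncomputable def digamma (x : ℝ) : ℝ := deriv Real.Gamma x / Real.Gamma x

/-- `g₂(x) = 3/2 - γ - ψ(x+1) - 2x(ψ(2x) - ψ(x))`. -/
noncomputable def g2 (x : ℝ) : ℝ :=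
  3 / 2 - Real.eulerMascheroniConstant - digamma (x + 1)
    - 2 * x * (digamma (2 * x) - digamma x)

/-- `g₃(x) = 2 - γ - ψ(x+1) + (x/2)(5-3x)ψ(x) - x(1-6x)ψ(2x) - (3x/2)(1+3x)ψ(3x)`. -/
noncomputable def g3 (x : ℝ) : ℝ :=
  2 - Real.eulerMascheroniConstant - digamma (x + 1)
    + x / 2 * (5 - 3 * x) * digamma x
    - x * (1 - 6 * x) * digamma (2 * x)
    - 3 * x / 2 * (1 + 3 * x) * digamma (3 * x)

/-- `β₁(ℓ) = (1/ℓ)(-γ - ψ(1/ℓ))`. -/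
noncomputable def beta1 (l : ℝ) : ℝ :=
  1 / l * (-Real.eulerMascheroniConstant - digamma (1 / l))

/-- `β₂(ℓ) = (1/ℓ)[1 - γ - (1 - 2/ℓ)ψ(1/ℓ) - (2/ℓ)ψ(2/ℓ)]`. -/
noncomputable def beta2 (l : ℝ) : ℝ :=
  1 / l * (1 - Real.eulerMascheroniConstant - (1 - 2 / l) * digamma (1 / l)
    - 2 / l * digamma (2 / l))

/-- `β₃(ℓ) = (1/ℓ)[3/2 - γ - (1 - 3/(2ℓ))(1 - 1/ℓ)ψ(1/ℓ) - (1/ℓ)(1 - 6/ℓ)ψ(2/ℓ)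
  - (3/(2ℓ))(1 + 3/ℓ)ψ(3/ℓ)]`. -/
noncomputable def beta3 (l : ℝ) : ℝ :=
  1 / l * (3 / 2 - Real.eulerMascheroniConstant
    - (1 - 3 / (2 * l)) * (1 - 1 / l) * digamma (1 / l)
    - 1 / l * (1 - 6 / l) * digamma (2 / l)
    - 3 / (2 * l) * (1 + 3 / l) * digamma (3 / l))

namespace BetaAux

open Real Set Filter Topology Finset

local notation "γ" => Real.eulerMascheroniConstant

noncomputable def f : ℝ → ℝ := Real.log ∘ Real.Gamma

lemma diffGamma {x : ℝ} (hx : 0 < x) : DifferentiableAt ℝ Real.Gamma x :=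
  Real.differentiableAt_Gamma fun m =>
    ((neg_nonpos.mpr (Nat.cast_nonneg m)).trans_lt hx).ne'

lemma diff_f {x : ℝ} (hx : 0 < x) : DifferentiableAt ℝ f x :=
  (diffGamma hx).log (Real.Gamma_pos_of_pos hx).ne'

lemma digamma_eq {x : ℝ} (hx : 0 < x) : digamma x = deriv f x := by
  rw [digamma, f, Function.comp_def,
    deriv.log (diffGamma hx) (Real.Gamma_pos_of_pos hx).ne']

lemma deriv_f_add_one {x : ℝ} (hx : 0 < x) : deriv f (x + 1) = deriv f x + 1 / x := by
  rw [← deriv_comp_add_const, one_div, ← Real.deriv_log,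
    ← deriv_fun_add (diff_f hx) (Real.differentiableAt_log hx.ne')]
  apply Filter.EventuallyEq.deriv_eq
  filter_upwards [eventually_gt_nhds hx] with y hy
  simp only [f, Function.comp_apply, Real.Gamma_add_one hy.ne',
    Real.log_mul hy.ne' (Real.Gamma_pos_of_pos hy).ne', add_comm]

lemma deriv_f_mono {a b : ℝ} (ha : 0 < a) (hab : a ≤ b) : deriv f a ≤ deriv f b :=
  Real.convexOn_log_Gamma.monotoneOn_deriv (fun y hy => diff_f hy)
    (mem_Ioi.mpr ha) (mem_Ioi.mpr (ha.trans_le hab)) hab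

lemma harmonic_cast (n : ℕ) :
    ((harmonic n : ℚ) : ℝ) = ∑ i ∈ Finset.range n, 1 / ((i : ℝ) + 1) := by
  rw [harmonic]
  push_cast
  simp [one_div]

lemma deriv_f_nat (n : ℕ) :
    deriv f ((n : ℝ) + 1) = -γ + ∑ i ∈ Finset.range n, 1 / ((i : ℝ) + 1) := by
  have h0 : (0:ℝ) < (n:ℝ) + 1 := by positivity
  have h1 : deriv f ((n : ℝ) + 1) = digamma ((n : ℝ) + 1) := (digamma_eq h0).symm
  rw [h1, digamma, Real.deriv_Gamma_nat, Real.Gamma_nat_eq_factorial, ← harmonic_cast]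
  have hne : (Nat.factorial n : ℝ) ≠ 0 := by positivity
  field_simp

lemma deriv_f_shift {x : ℝ} (hx : 0 < x) (n : ℕ) :
    deriv f (x + n) = deriv f x + ∑ k ∈ Finset.range n, 1 / (x + k) := by
  induction n with
  | zero => simp
  | succ n ih =>
    have hxn : 0 < x + n := by positivity
    have : x + ((n : ℝ) + 1) = (x + n) + 1 := by ring
    push_cast
    rw [this, deriv_f_add_one hxn, ih, Finset.sum_range_succ]
    ring

lemma summable_diff {a b : ℝ} (ha : 0 ≤ a) (hab : a ≤ b) :
    Summable (fun n : ℕ => 1 / ((n : ℝ) + 1 + a) - 1 / ((n : ℝ) + 1 + b)) := by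
  have hsq : Summable (fun n : ℕ => (b - a) * (1 / ((n : ℝ) + 1) ^ 2)) := by
    apply Summable.mul_left
    have h := Real.summable_one_div_nat_pow.mpr (by norm_num : 1 < 2)
    have h2 := (summable_nat_add_iff 1).mpr h
    refine h2.congr fun n => ?_
    push_cast
    ring
  refine Summable.of_nonneg_of_le (fun n => ?_) (fun n => ?_) hsq
  · have hn := Nat.cast_nonneg (α := ℝ) n
    have h1 : (0:ℝ) < (n : ℝ) + 1 + a := by linarith
    have h2 : (n : ℝ) + 1 + a ≤ (n : ℝ) + 1 + b := by linarith
    have h3 := one_div_le_one_div_of_le h1 h2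
    linarith
  · have hn := Nat.cast_nonneg (α := ℝ) n
    have h1 : (0:ℝ) < (n : ℝ) + 1 + a := by linarith
    have h2 : (0:ℝ) < (n : ℝ) + 1 + b := by linarith
    have heq : 1 / ((n : ℝ) + 1 + a) - 1 / ((n : ℝ) + 1 + b)
        = (b - a) / (((n : ℝ) + 1 + a) * ((n : ℝ) + 1 + b)) := by
      rw [div_sub_div _ _ h1.ne' h2.ne']
      congr 1
      ring
    have hba : (0:ℝ) ≤ b - a := by linarith
    have hX : ((n:ℝ)+1)^2 ≤ ((n:ℝ)+1+a) * ((n:ℝ)+1+b) := by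
      nlinarith [Nat.cast_nonneg (α := ℝ) n]
    rw [heq, mul_one_div, div_eq_mul_one_div (b-a), div_eq_mul_one_div (b-a)]
    exact mul_le_mul_of_nonneg_left (one_div_le_one_div_of_le (by positivity) hX) hba

lemma digamma_series {x : ℝ} (hx : 0 < x) :
    digamma x = -γ - 1 / x + ∑' n : ℕ, (1 / ((n : ℝ) + 1) - 1 / ((n : ℝ) + 1 + x)) := by
  have hsum : Summable (fun n : ℕ => 1 / ((n : ℝ) + 1) - 1 / ((n : ℝ) + 1 + x)) := by
    have h := summable_diff (le_refl 0) hx.le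
    simpa using h
  set S := ∑' n : ℕ, (1 / ((n : ℝ) + 1) - 1 / ((n : ℝ) + 1 + x)) with hS
  set c := Nat.ceil x with hc
  have hxc : x ≤ c := Nat.le_ceil x
  set A : ℕ → ℝ := fun n => -γ + (∑ i ∈ Finset.range n, 1 / ((i : ℝ) + 1))
      - ∑ k ∈ Finset.range (n + 1), 1 / (x + (k : ℝ)) with hA
  have hsplit : ∀ n : ℕ, ∑ k ∈ Finset.range (n + 1), 1 / (x + (k : ℝ))
      = 1 / x + ∑ k ∈ Finset.range n, 1 / ((k : ℝ) + 1 + x) := by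
    intro n
    rw [Finset.sum_range_succ' (fun k => 1 / (x + (k : ℝ))) n, add_comm]
    congr 1
    · norm_num
    · refine Finset.sum_congr rfl fun i _ => ?_
      push_cast
      ring_nf
  have hAeq : ∀ n, A n = -γ - 1 / x
      + ∑ k ∈ Finset.range n, (1 / ((k : ℝ) + 1) - 1 / ((k : ℝ) + 1 + x)) := by
    intro n
    rw [hA]
    simp only []
    rw [hsplit n, Finset.sum_sub_distrib]
    ring
  have hAtend : Tendsto A atTop (𝓝 (-γ - 1 / x + S)) := by
    have h2 : Tendsto (fun n : ℕ => -γ - 1 / x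
        + ∑ k ∈ Finset.range n, (1 / ((k : ℝ) + 1) - 1 / ((k : ℝ) + 1 + x))) atTop
        (𝓝 (-γ - 1 / x + S)) := tendsto_const_nhds.add hsum.hasSum.tendsto_sum_nat
    exact h2.congr fun n => (hAeq n).symm
  have hlow : ∀ n : ℕ, A n ≤ deriv f x := by
    intro n
    have h1 : deriv f ((n : ℝ) + 1) ≤ deriv f (x + ((n + 1 : ℕ) : ℝ)) := by
      apply deriv_f_mono (by positivity)
      push_cast; linarith
    rw [deriv_f_nat, deriv_f_shift hx] at h1
    simp only [hA]
    linarith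
  have hdiff : ∀ n : ℕ, (∑ i ∈ Finset.range (n + c), 1 / ((i : ℝ) + 1))
      - ∑ i ∈ Finset.range n, 1 / ((i : ℝ) + 1)
      = ∑ i ∈ Finset.Ico n (n + c), 1 / ((i : ℝ) + 1) := by
    intro n
    rw [Finset.sum_Ico_eq_sub _ (Nat.le_add_right n c)]
  have hup : ∀ n : ℕ, deriv f x ≤ A n
      + ∑ i ∈ Finset.Ico n (n + c), 1 / ((i : ℝ) + 1) := by
    intro n
    have h1 : deriv f (x + ((n + 1 : ℕ) : ℝ)) ≤ deriv f (((n + c : ℕ) : ℝ) + 1) := by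
      apply deriv_f_mono (by positivity)
      push_cast; linarith
    rw [deriv_f_nat, deriv_f_shift hx] at h1
    rw [← hdiff n]
    simp only [hA]
    linarith
  have hdiff0 : Tendsto (fun n : ℕ => ∑ i ∈ Finset.Ico n (n + c), 1 / ((i : ℝ) + 1))
      atTop (𝓝 0) := by
    apply squeeze_zero (g := fun n : ℕ => (c : ℝ) * (1 / ((n : ℝ) + 1)))
    · intro n
      exact Finset.sum_nonneg fun i _ => by positivity
    · intro n
      calc ∑ i ∈ Finset.Ico n (n + c), 1 / ((i : ℝ) + 1)
          ≤ ∑ i ∈ Finset.Ico n (n + c), 1 / ((n : ℝ) + 1) := by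
            refine Finset.sum_le_sum fun i hi => ?_
            have : (n : ℝ) ≤ i := by exact_mod_cast (Finset.mem_Ico.mp hi).1
            apply one_div_le_one_div_of_le (by positivity)
            linarith
        _ = (c : ℝ) * (1 / ((n : ℝ) + 1)) := by
            rw [Finset.sum_const, Nat.card_Ico]
            simp [Nat.add_sub_cancel_left, nsmul_eq_mul]
    · have h0 : Tendsto (fun n : ℕ => 1 / ((n : ℝ) + 1)) atTop (𝓝 0) :=
        tendsto_one_div_add_atTop_nhds_zero_nat
      have := h0.const_mul (c : ℝ)
      simpa using this
  have hle1 : -γ - 1 / x + S ≤ deriv f x :=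
    le_of_tendsto hAtend (Filter.Eventually.of_forall hlow)
  have hle2 : deriv f x ≤ -γ - 1 / x + S := by
    have hB := hAtend.add hdiff0
    rw [add_zero] at hB
    exact ge_of_tendsto hB (Filter.Eventually.of_forall hup)
  rw [digamma_eq hx]
  linarith

end BetaAux

theorem beta1_sub_beta2 :
    (∀ x : ℝ, 0 < x → x < 1 →
      beta1 (1 / x) - beta2 (1 / x) =
        2 * x ^ 2 * ∑' n : ℕ, (1 / ((n : ℝ) + 1 + x) - 1 / ((n : ℝ) + 1 + 2 * x)) ∧
      0 < beta1 (1 / x) - beta2 (1 / x)) ∧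
    ∀ ℓ : ℕ, 2 ≤ ℓ → beta2 (ℓ : ℝ) < beta1 (ℓ : ℝ) := by
  have hmain : ∀ x : ℝ, 0 < x → x < 1 →
      beta1 (1 / x) - beta2 (1 / x) =
        2 * x ^ 2 * ∑' n : ℕ, (1 / ((n : ℝ) + 1 + x) - 1 / ((n : ℝ) + 1 + 2 * x)) ∧
      0 < beta1 (1 / x) - beta2 (1 / x) := by
    intro x hx0 hx1
    have h2x : (0:ℝ) < 2 * x := by linarith
    have s1 : Summable (fun n : ℕ => 1 / ((n : ℝ) + 1) - 1 / ((n : ℝ) + 1 + x)) := by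
      simpa using BetaAux.summable_diff (le_refl 0) hx0.le
    have s2 : Summable (fun n : ℕ => 1 / ((n : ℝ) + 1) - 1 / ((n : ℝ) + 1 + 2 * x)) := by
      simpa using BetaAux.summable_diff (le_refl 0) h2x.le
    have s3 : Summable (fun n : ℕ => 1 / ((n : ℝ) + 1 + x) - 1 / ((n : ℝ) + 1 + 2 * x)) :=
      BetaAux.summable_diff hx0.le (by linarith)
    set S1 := ∑' n : ℕ, (1 / ((n : ℝ) + 1) - 1 / ((n : ℝ) + 1 + x)) with hS1
    set S2 := ∑' n : ℕ, (1 / ((n : ℝ) + 1) - 1 / ((n : ℝ) + 1 + 2 * x)) with hS2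
    set D := ∑' n : ℕ, (1 / ((n : ℝ) + 1 + x) - 1 / ((n : ℝ) + 1 + 2 * x)) with hD
    have hDeq : D = S2 - S1 := by
      rw [hD, hS1, hS2, ← Summable.tsum_sub s2 s1]
      exact tsum_congr fun n => by ring
    have hpsx := BetaAux.digamma_series hx0
    have hps2x := BetaAux.digamma_series h2x
    have key : beta1 (1 / x) - beta2 (1 / x) = 2 * x ^ 2 * D := by
      have h2 : 2 / (1 / x) = 2 * x := by
        field_simp
      rw [beta1, beta2, one_div_one_div, h2, hpsx, hps2x, ← hS1, ← hS2, hDeq]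
      have hxne : x ≠ 0 := ne_of_gt hx0
      field_simp
      ring
    have hDpos : 0 < D := by
      refine Summable.tsum_pos s3 (fun n => ?_) 0 ?_
      · have h1 : (0:ℝ) < (n : ℝ) + 1 + x := by positivity
        have h2 : (n : ℝ) + 1 + x ≤ (n : ℝ) + 1 + 2 * x := by linarith
        have h3 := one_div_le_one_div_of_le h1 h2
        linarith
      · have h1 : (0:ℝ) < (0 : ℕ) + (1:ℝ) + x := by positivity
        have h2 : ((0 : ℕ) : ℝ) + 1 + x < ((0 : ℕ) : ℝ) + 1 + 2 * x := by
          push_cast; linarith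
        have h3 := one_div_lt_one_div_of_lt h1 h2
        simp only [Nat.cast_zero] at h3 ⊢
        linarith
    exact ⟨key, by rw [key]; exact mul_pos (by positivity) hDpos⟩
  refine ⟨hmain, fun ℓ hℓ => ?_⟩
  have hl2 : (2:ℝ) ≤ (ℓ : ℝ) := by exact_mod_cast hℓ
  have hl0 : (0:ℝ) < (ℓ : ℝ) := by linarith
  have hx0 : (0:ℝ) < 1 / (ℓ : ℝ) := by positivity
  have hx1 : 1 / (ℓ : ℝ) < 1 := by
    rw [div_lt_one hl0]; linarith
  have h := (hmain (1 / (ℓ : ℝ)) hx0 hx1).2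
  rw [one_div_one_div] at h
  linarith
end

section
/- For every real x with 0 < x < 1, β₂(1/x) - β₃(1/x) = (x²/2) ∑_{n≥1} ((1-3x)/(n+x) + 2(1+6x)/(n+2x) - 3(1+3x)/(n+3x)) > 0; in particular β₂(ℓ) > β₃(ℓ) for every integer ℓ ≥ 2. -/
open Real Filter Finset Topology Set


private lemma gdiff {x : ℝ} (hx : 0 < x) : DifferentiableAt ℝ Real.Gamma x :=
  Real.differentiableAt_Gamma fun m => ((neg_nonpos.mpr m.cast_nonneg).trans_lt hx).ne'

private lemma ldiff {x : ℝ} (hx : 0 < x) :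
    DifferentiableAt ℝ (Real.log ∘ Real.Gamma) x :=
  (gdiff hx).log (Real.Gamma_pos_of_pos hx).ne'

private lemma digamma_eq {x : ℝ} (hx : 0 < x) :
    digamma x = deriv (Real.log ∘ Real.Gamma) x := by
  rw [Function.comp_def, deriv.log (gdiff hx) (Real.Gamma_pos_of_pos hx).ne', digamma]

private lemma digamma_mono {a b : ℝ} (ha : 0 < a) (hab : a ≤ b) :
    digamma a ≤ digamma b := by
  rcases eq_or_lt_of_le hab with rfl | h
  · exact le_refl _
  have hb : 0 < b := ha.trans h
  rw [digamma_eq ha, digamma_eq hb]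
  exact (Real.convexOn_log_Gamma.deriv_le_slope (mem_Ioi.mpr ha) (mem_Ioi.mpr hb) h
      (ldiff ha)).trans
    (Real.convexOn_log_Gamma.slope_le_deriv (mem_Ioi.mpr ha) (mem_Ioi.mpr hb) h (ldiff hb))

private lemma digamma_add_one {x : ℝ} (hx : 0 < x) :
    digamma (x + 1) = digamma x + 1 / x := by
  rw [digamma_eq (by linarith), digamma_eq hx]
  rw [← deriv_comp_add_const, one_div, ← Real.deriv_log,
    ← deriv_add (ldiff hx) (Real.differentiableAt_log hx.ne')]
  apply Filter.EventuallyEq.deriv_eq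
  filter_upwards [eventually_gt_nhds hx] with y hy
  simp only [Function.comp_apply, Real.Gamma_add_one hy.ne',
    Real.log_mul hy.ne' (Real.Gamma_pos_of_pos hy).ne', add_comm]
  rfl

private lemma digamma_nat (n : ℕ) :
    digamma ((n : ℝ) + 1) = -Real.eulerMascheroniConstant + harmonic n := by
  rw [digamma, Real.deriv_Gamma_nat n, Real.Gamma_nat_eq_factorial,
    mul_div_cancel_left₀]
  exact_mod_cast Nat.factorial_ne_zero n

private lemma digamma_add_nat {x : ℝ} (hx : 0 < x) (n : ℕ) :
    digamma (x + n) = digamma x + ∑ k ∈ Finset.range n, 1 / (x + k) := by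
  induction n with
  | zero => simp
  | succ n ih =>
    have h : x + ((n : ℕ) + 1 : ℕ) = (x + n) + 1 := by push_cast; ring
    rw [h, digamma_add_one (by positivity), ih, Finset.sum_range_succ, add_assoc]

private lemma harmonic_real (n : ℕ) :
    ((harmonic n : ℚ) : ℝ) = ∑ k ∈ Finset.range n, 1 / ((k : ℝ) + 1) := by
  rw [harmonic]
  push_cast
  simp [one_div]

private lemma digamma_hasSum {x : ℝ} (hx : 0 < x) :
    HasSum (fun n : ℕ => 1 / ((n : ℝ) + 1) - 1 / (x + ((n : ℝ) + 1)))
      (digamma x + Real.eulerMascheroniConstant + 1 / x) := by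
  set f : ℕ → ℝ := fun n => 1 / ((n : ℝ) + 1) - 1 / (x + ((n : ℝ) + 1)) with hf
  set L : ℝ := digamma x + Real.eulerMascheroniConstant + 1 / x with hL
  set m : ℕ := ⌈x⌉₊ with hm
  have hxm : x ≤ m := Nat.le_ceil x
  clear_value f L m
  have hfnn : ∀ n : ℕ, 0 ≤ f n := by
    intro n
    have h1 : (0:ℝ) < (n:ℝ) + 1 := by positivity
    have h2 : (n:ℝ) + 1 ≤ x + ((n:ℝ) + 1) := by linarith
    simpa [hf] using one_div_le_one_div_of_le h1 h2
  -- partial sum formula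
  have hT : ∀ n : ℕ, ∑ k ∈ Finset.range n, f k
      = ((harmonic n : ℚ) : ℝ) - (∑ k ∈ Finset.range (n+1), 1 / (x + k)) + 1 / x := by
    intro n
    simp only [hf]
    rw [harmonic_real, Finset.sum_range_succ' (fun k => 1 / (x + (k:ℝ))) n]
    push_cast
    rw [Finset.sum_sub_distrib]
    ring
  -- sandwich
  have hsand : ∀ n : ℕ, L - ((harmonic (n+m) : ℚ) : ℝ) + ((harmonic n : ℚ) : ℝ)
      ≤ ∑ k ∈ Finset.range n, f k ∧ ∑ k ∈ Finset.range n, f k ≤ L := by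
    intro n
    have key := digamma_add_nat hx (n+1)
    have hlow : -Real.eulerMascheroniConstant + ((harmonic n : ℚ) : ℝ) ≤ digamma (x + (n+1 : ℕ)) := by
      rw [← digamma_nat n]
      exact digamma_mono (by positivity) (by push_cast; linarith)
    have hup : digamma (x + (n+1 : ℕ)) ≤ -Real.eulerMascheroniConstant + ((harmonic (n+m) : ℚ) : ℝ) := by
      rw [← digamma_nat (n+m)]
      exact digamma_mono (by positivity) (by push_cast; linarith)
    rw [key] at hlow hup
    rw [hT n]
    constructor <;> [skip; skip] <;> · rw [hL]; push_cast at hlow hup ⊢; linarith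
  have hsum : Summable f :=
    summable_of_sum_range_le hfnn (fun n => (hsand n).2)
  -- harmonic difference bound
  have hD : ∀ n : ℕ, ((harmonic (n+m) : ℚ) : ℝ) - ((harmonic n : ℚ) : ℝ) ≤ (m : ℝ) / ((n : ℝ) + 1) := by
    intro n
    rw [harmonic_real, harmonic_real, ← Finset.sum_Ico_eq_sub _ (Nat.le_add_right n m)]
    calc ∑ k ∈ Finset.Ico n (n+m), 1 / ((k:ℝ)+1)
        ≤ ∑ _k ∈ Finset.Ico n (n+m), 1 / ((n:ℝ)+1) := by
          apply Finset.sum_le_sum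
          intro k hk
          have hk' := (Finset.mem_Ico.mp hk).1
          apply one_div_le_one_div_of_le (by positivity)
          have : (n:ℝ) ≤ k := by exact_mod_cast hk'
          linarith
      _ = (m : ℝ) / ((n:ℝ)+1) := by
          rw [Finset.sum_const, Nat.card_Ico, Nat.add_sub_cancel_left]
          push_cast
          ring
  -- squeeze
  have hmono : Tendsto (fun n : ℕ => ∑ k ∈ Finset.range n, f k) atTop (𝓝 L) := by
    apply tendsto_of_tendsto_of_tendsto_of_le_of_le
      (g := fun n : ℕ => L - (m : ℝ) / ((n : ℝ) + 1)) (h := fun _ : ℕ => L)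
    · have h0 : Tendsto (fun n : ℕ => (m : ℝ) / ((n : ℝ) + 1)) atTop (𝓝 0) := by
        have := (tendsto_const_div_atTop_nhds_zero_nat (m : ℝ)).comp (tendsto_add_atTop_nat 1)
        simpa [Function.comp_def] using this
      simpa using tendsto_const_nhds.sub h0
    · exact tendsto_const_nhds
    · intro n
      have h1 := (hsand n).1
      have h2 := hD n
      simp only
      linarith
    · exact fun n => (hsand n).2
  exact (tendsto_nhds_unique hsum.hasSum.tendsto_sum_nat hmono) ▸ hsum.hasSum

private lemma term_eq {x : ℝ} (hx : 0 < x) (n : ℕ) :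
    (1 - 3 * x) / ((n : ℝ) + 1 + x) + 2 * (1 + 6 * x) / ((n : ℝ) + 1 + 2 * x)
      - 3 * (1 + 3 * x) / ((n : ℝ) + 1 + 3 * x)
    = x * (4 * ((n:ℝ)+1) + 6 * ((n:ℝ)+1) * x + 6 * x)
        / (((n:ℝ)+1+x) * (((n:ℝ)+1+2*x) * ((n:ℝ)+1+3*x))) := by
  have h1 : ((n:ℝ)+1+x) ≠ 0 := by positivity
  have h2 : ((n:ℝ)+1+2*x) ≠ 0 := by positivity
  have h3 : ((n:ℝ)+1+3*x) ≠ 0 := by positivity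
  field_simp
  ring

private lemma term_pos {x : ℝ} (hx : 0 < x) (n : ℕ) :
    0 < (1 - 3 * x) / ((n : ℝ) + 1 + x) + 2 * (1 + 6 * x) / ((n : ℝ) + 1 + 2 * x)
      - 3 * (1 + 3 * x) / ((n : ℝ) + 1 + 3 * x) := by
  rw [term_eq hx n]
  positivity

private lemma key_hasSum {x : ℝ} (hx : 0 < x) :
    HasSum (fun n : ℕ => (1 - 3 * x) / ((n : ℝ) + 1 + x)
        + 2 * (1 + 6 * x) / ((n : ℝ) + 1 + 2 * x)
        - 3 * (1 + 3 * x) / ((n : ℝ) + 1 + 3 * x))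
      (-(1 - 3 * x) * digamma x - 2 * (1 + 6 * x) * digamma (2 * x)
        + 3 * (1 + 3 * x) * digamma (3 * x) - 1 / x) := by
  have h1 := (digamma_hasSum hx).mul_left (-(1 - 3 * x))
  have h2 := (digamma_hasSum (by linarith : (0:ℝ) < 2 * x)).mul_left (-(2 * (1 + 6 * x)))
  have h3 := (digamma_hasSum (by linarith : (0:ℝ) < 3 * x)).mul_left (3 * (1 + 3 * x))
  have h := (h1.add h2).add h3
  have hxne : x ≠ 0 := hx.ne'
  convert h using 1
  · exact rfl
  · funext n
    have e1 : ((n:ℝ)+1) ≠ 0 := by positivity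
    have e2 : x + ((n:ℝ)+1) ≠ 0 := by positivity
    have e3 : 2*x + ((n:ℝ)+1) ≠ 0 := by positivity
    have e4 : 3*x + ((n:ℝ)+1) ≠ 0 := by positivity
    have e2' : ((n:ℝ)+1+x) ≠ 0 := by positivity
    have e3' : ((n:ℝ)+1+2*x) ≠ 0 := by positivity
    have e4' : ((n:ℝ)+1+3*x) ≠ 0 := by positivity
    field_simp
    ring
  · field_simp
    ring

theorem beta2_sub_beta3 :
    (∀ x : ℝ, 0 < x → x < 1 →
      beta2 (1 / x) - beta3 (1 / x) =
        x ^ 2 / 2 * ∑' n : ℕ, ((1 - 3 * x) / ((n : ℝ) + 1 + x)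
          + 2 * (1 + 6 * x) / ((n : ℝ) + 1 + 2 * x)
          - 3 * (1 + 3 * x) / ((n : ℝ) + 1 + 3 * x)) ∧
      0 < beta2 (1 / x) - beta3 (1 / x)) ∧
    ∀ ℓ : ℕ, 2 ≤ ℓ → beta3 (ℓ : ℝ) < beta2 (ℓ : ℝ) := by
  have main : ∀ x : ℝ, 0 < x → x < 1 →
      beta2 (1 / x) - beta3 (1 / x) =
        x ^ 2 / 2 * ∑' n : ℕ, ((1 - 3 * x) / ((n : ℝ) + 1 + x)
          + 2 * (1 + 6 * x) / ((n : ℝ) + 1 + 2 * x)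
          - 3 * (1 + 3 * x) / ((n : ℝ) + 1 + 3 * x)) ∧
      0 < beta2 (1 / x) - beta3 (1 / x) := by
    intro x hx hx1
    have hxne : x ≠ 0 := hx.ne'
    have key := key_hasSum hx
    have heq : beta2 (1 / x) - beta3 (1 / x) =
        x ^ 2 / 2 * ∑' n : ℕ, ((1 - 3 * x) / ((n : ℝ) + 1 + x)
          + 2 * (1 + 6 * x) / ((n : ℝ) + 1 + 2 * x)
          - 3 * (1 + 3 * x) / ((n : ℝ) + 1 + 3 * x)) := by
      rw [key.tsum_eq, beta2, beta3, one_div_one_div]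
      have e2 : (2:ℝ) / (1 / x) = 2 * x := by field_simp
      have e3 : (3:ℝ) / (1 / x) = 3 * x := by field_simp
      rw [e2, e3]
      field_simp
      ring
    refine ⟨heq, ?_⟩
    rw [heq]
    have hpos : 0 < ∑' n : ℕ, ((1 - 3 * x) / ((n : ℝ) + 1 + x)
          + 2 * (1 + 6 * x) / ((n : ℝ) + 1 + 2 * x)
          - 3 * (1 + 3 * x) / ((n : ℝ) + 1 + 3 * x)) :=
      Summable.tsum_pos key.summable (fun n => (term_pos hx n).le) 0 (term_pos hx 0)
    have : 0 < x ^ 2 / 2 := by positivity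
    exact mul_pos this hpos
  refine ⟨main, ?_⟩
  intro ℓ hℓ
  have hℓ0 : (0:ℝ) < (ℓ : ℝ) := by
    have : 0 < ℓ := by omega
    exact_mod_cast this
  have hx : 0 < 1 / (ℓ:ℝ) := by positivity
  have hx1 : 1 / (ℓ:ℝ) < 1 := by
    rw [div_lt_one hℓ0]
    exact_mod_cast by omega
  have h := (main _ hx hx1).2
  rw [one_div_one_div] at h
  linarith
end
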